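/- Let R be monotone in the set-valued sense: for all X, Y in L^∞_d, if X(ω) − Y(ω) ∈ K^d for P-almost every ω, then R(Y) ⊆ R(X) + K^n. Then the scalarization ρ_l is monotone: for all X, Y in L^∞_d with X(ω) − Y(ω) ∈ K^d for P-almost every ω, one has ρ_l(Y) − ρ_l(X) ∈ K^n (indeed each component of ρ_l(Y) is greater than or equal to the corresponding component of ρ_l(X)). -/

import Mathlib

open MeasureTheory Pointwise

/-- If the set-valued risk measure `R` is monotone (in the set-valued
sense), then its scalarization `ρ_l` along the ray `l` through a strictly positive
vector `v` is monotone: `ρ_l Y - ρ_l X ∈ K^n`, and indeed componentwise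
`ρ_l X j ≤ ρ_l Y j`. -/
theorem setValuedRiskMeasure_scalarization_monotone
    {Ω : Type*} [MeasurableSpace Ω] (P : Measure Ω) [IsProbabilityMeasure P]
    {d n : ℕ}
    (Kd : Set (Fin d → ℝ)) (Kn : Set (Fin n → ℝ))
    (hKd_closed : IsClosed Kd) (hKd_convex : Convex ℝ Kd)
    (hKd_cone : ∀ x ∈ Kd, ∀ t : ℝ, 0 ≤ t → t • x ∈ Kd)
    (hKd_orth : ∀ x : Fin d → ℝ, (∀ i, 0 ≤ x i) → x ∈ Kd)
    (hKn_closed : IsClosed Kn) (hKn_convex : Convex ℝ Kn)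
    (hKn_cone : ∀ y ∈ Kn, ∀ t : ℝ, 0 ≤ t → t • y ∈ Kn)
    (hKn_orth : ∀ y : Fin n → ℝ, (∀ j, 0 ≤ y j) → y ∈ Kn)
    (v : Fin n → ℝ) (hv : ∀ j, 0 < v j)
    (l : Set (Fin n → ℝ)) (hl : l = {y | ∃ t : ℝ, 0 ≤ t ∧ y = t • v})
    (R : Lp (Fin d → ℝ) ⊤ P → Set (Fin n → ℝ))
    (hR_closed : ∀ Z, IsClosed (R Z))
    (hR_add : ∀ Z, R Z + Kn = R Z)
    (hR_ray : ∀ Z, (R Z ∩ l).Nonempty)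
    (ρ : Lp (Fin d → ℝ) ⊤ P → (Fin n → ℝ))
    (hρ : ∀ Z j, ρ Z j = sInf ((fun y => y j) '' (R Z ∩ l)))
    -- monotonicity of `R` in the set-valued sense
    (hmono : ∀ X Y : Lp (Fin d → ℝ) ⊤ P,
      (∀ᵐ ω ∂P, X ω - Y ω ∈ Kd) → R Y ⊆ R X + Kn) :
    ∀ X Y : Lp (Fin d → ℝ) ⊤ P,
      (∀ᵐ ω ∂P, X ω - Y ω ∈ Kd) →
      ρ Y - ρ X ∈ Kn ∧ ∀ j, ρ X j ≤ ρ Y j := by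
  intro X Y h
  have hsub : R Y ⊆ R X := by
    have := hmono X Y h
    rwa [hR_add X] at this
  have hle : ∀ j, ρ X j ≤ ρ Y j := by
    intro j
    rw [hρ X j, hρ Y j]
    apply csInf_le_csInf
    · refine ⟨0, ?_⟩
      rintro r ⟨y, ⟨hy, hyl⟩, rfl⟩
      rw [hl] at hyl
      obtain ⟨t, ht, rfl⟩ := hyl
      simp only [Pi.smul_apply, smul_eq_mul]
      exact mul_nonneg ht (hv j).le
    · obtain ⟨y, hy⟩ := hR_ray Y
      exact ⟨y j, y, hy, rfl⟩
    · exact Set.image_mono (Set.inter_subset_inter_left _ hsub)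
  refine ⟨hKn_orth _ fun j => ?_, hle⟩
  simp only [Pi.sub_apply, sub_nonneg]
  exact hle j
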